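/- Fix a positive integer n, and let L_n be the graph consisting of a path r, v_n, v_{n-1}, …, v_2, v_1 of length n together with 2^{n+1} internally disjoint paths of length 2 from v_1 to a common vertex u_0 (with middle vertices u_1, …, u_{2^{n+1}}). Define the weight function w by w(r) = 0, w(v_j) = 2^j for 1 ≤ j ≤ n, and w(u_i) = 1 for 0 ≤ i ≤ 2^{n+1}. Then w is valid: every configuration p with w(p) ≥ 2^{n+2} is r-solvable (equivalently, every r-unsolvable configuration satisfies w(p) ≤ w(1_{L_n}) = 2^{n+2} − 1). -/

import Mathlib

open SimpleGraph Finset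

def PebMove {V : Type*} [DecidableEq V] (G : SimpleGraph V) (p q : V → ℕ) : Prop :=
  ∃ u v, G.Adj u v ∧ 2 ≤ p u ∧
    q = fun x => if x = u then p u - 2 else if x = v then p v + 1 else p x

def Solvable {V : Type*} [DecidableEq V] (G : SimpleGraph V) (r : V) (p : V → ℕ) : Prop :=
  ∃ q, Relation.ReflTransGen (PebMove G) p q ∧ 1 ≤ q r

noncomputable def confWeight {V : Type*} [Fintype V] (w : V → ℝ) (p : V → ℕ) : ℝ :=
  ∑ v, (p v : ℝ) * w v

def ValidWeight {V : Type*} [Fintype V] [DecidableEq V] (G : SimpleGraph V) (r : V)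
    (w : V → ℝ) : Prop :=
  w r = 0 ∧ (∀ v, v ≠ r → 0 < w v) ∧
    ∀ p : V → ℕ, ¬ Solvable G r p → confWeight w p ≤ confWeight w (fun _ => 1)

noncomputable def rootedPebblingNumber {V : Type*} [Fintype V] [DecidableEq V]
    (G : SimpleGraph V) (r : V) : ℕ :=
  sInf {N | ∀ p : V → ℕ, N ≤ ∑ v, p v → Solvable G r p}

noncomputable def pebblingNumber {V : Type*} [Fintype V] [DecidableEq V]
    (G : SimpleGraph V) : ℕ :=
  sInf {N | ∀ (r : V) (p : V → ℕ), N ≤ ∑ v, p v → Solvable G r p}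

def cubeGraph (n : ℕ) : SimpleGraph (Fin n → Bool) :=
  SimpleGraph.fromRel (fun x y => hammingDist x y = 1)

def addPendant {V : Type*} (G : SimpleGraph V) (a : V) : SimpleGraph (Option V) :=
  SimpleGraph.fromRel (fun x y =>
    match x, y with
    | some u, some v => G.Adj u v
    | none, some u => u = a
    | _, _ => False)

def lollipop (n m : ℕ) : SimpleGraph (Fin (n + 1) ⊕ Fin (m + 1)) :=
  SimpleGraph.fromRel (fun x y =>
    match x, y with
    | Sum.inl i, Sum.inl j => (i : ℕ) + 1 = (j : ℕ)
    | Sum.inl i, Sum.inr j => i = 0 ∧ j ≠ 0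
    | Sum.inr i, Sum.inr j => i = 0 ∧ j ≠ 0
    | _, _ => False)

/-- Weight function on the lollipop: `Sum.inl i` is the path vertex `v_{i+1}`
(`Sum.inl n` being the root `r`), and `Sum.inr j` are the vertices `u_j`. -/
noncomputable def wL (n : ℕ) {m : ℕ} : (Fin (n + 1) ⊕ Fin (m + 1)) → ℝ
  | Sum.inl i => if (i : ℕ) = n then 0 else 2 ^ ((i : ℕ) + 1)
  | Sum.inr _ => 1

namespace Peb13

lemma solvable_of_rel {V : Type*} [DecidableEq V] {G : SimpleGraph V} {r : V} {p q : V → ℕ}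
    (h : Relation.ReflTransGen (PebMove G) p q) (hq : Solvable G r q) : Solvable G r p := by
  obtain ⟨q', hq', h1⟩ := hq
  exact ⟨q', h.trans hq', h1⟩

lemma moveMany {V : Type*} [DecidableEq V] {G : SimpleGraph V} {u v : V} (huv : G.Adj u v) :
    ∀ (k : ℕ) (p : V → ℕ), 2 * k ≤ p u →
      Relation.ReflTransGen (PebMove G) p
        (fun x => if x = u then p u - 2 * k else if x = v then p v + k else p x)
  | 0, p, _ => by
      have h : (fun x => if x = u then p u - 2 * 0 else if x = v then p v + 0 else p x) = p := by
        funext x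
        by_cases h1 : x = u
        · subst h1; simp
        · by_cases h2 : x = v
          · subst h2; rw [if_neg h1, if_pos rfl]; omega
          · rw [if_neg h1, if_neg h2]
      rw [h]
  | (k+1), p, hk => by
      have hne : u ≠ v := huv.ne
      have h2 : 2 ≤ p u := by omega
      have hm : PebMove G p (fun x => if x = u then p u - 2 else if x = v then p v + 1 else p x) :=
        ⟨u, v, huv, h2, rfl⟩
      set p1 : V → ℕ := fun x => if x = u then p u - 2 else if x = v then p v + 1 else p x with hp1
      have h1u : p1 u = p u - 2 := by simp [hp1]
      have h1v : p1 v = p v + 1 := by simp [hp1, hne.symm]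
      have hrec := moveMany huv k p1 (by rw [h1u]; omega)
      have heq : (fun x => if x = u then p1 u - 2 * k else if x = v then p1 v + k else p1 x)
      = (fun x => if x = u then p u - 2 * (k+1) else if x = v then p v + (k+1) else p x) := by
        funext x
        by_cases hx : x = u
        · simp [hx, h1u]; omega
        · by_cases hx2 : x = v
          · simp [hx, hx2, h1v, hne.symm]; omega
          · simp [hx, hx2, hp1]
      rw [heq] at hrec
      exact hrec.head hm

lemma sum_split {V : Type*} [Fintype V] [DecidableEq V] {u v : V} (huv : u ≠ v) (f : V → ℕ) :
    ∑ x, f x = f u + f v + ∑ x ∈ (Finset.univ.erase u).erase v, f x := by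
  rw [← Finset.add_sum_erase _ f (Finset.mem_univ u),
    ← Finset.add_sum_erase _ f (Finset.mem_erase.2 ⟨huv.symm, Finset.mem_univ v⟩)]
  ring

lemma sum_pebmove {V : Type*} [Fintype V] [DecidableEq V] {G : SimpleGraph V} {p q : V → ℕ}
    (h : PebMove G p q) : (∑ x, q x) + 1 = ∑ x, p x := by
  obtain ⟨u, v, huv, h2, rfl⟩ := h
  have hne : u ≠ v := huv.ne
  rw [sum_split hne p, sum_split hne
    (fun x => if x = u then p u - 2 else if x = v then p v + 1 else p x)]
  have e1 : ∑ x ∈ (Finset.univ.erase u).erase v,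
      (if x = u then p u - 2 else if x = v then p v + 1 else p x) = ∑ x ∈ (Finset.univ.erase u).erase v, p x := by
    refine Finset.sum_congr rfl ?_
    intro x hx
    simp only [Finset.mem_erase] at hx
    simp [hx.1, hx.2.1]
  rw [e1, if_pos rfl, if_neg hne.symm, if_pos rfl]
  omega

def Dfun (t k : ℕ) : ℕ := if k ≤ 2*t then k/2 else t + (k - 2*t)/4


section Lolli
variable {n m : ℕ}

lemma adj_path {i j : Fin (n+1)} (h : (i:ℕ) + 1 = (j:ℕ)) :
    (lollipop n m).Adj (Sum.inl i) (Sum.inl j) := by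
  rw [lollipop, SimpleGraph.fromRel_adj]
  refine ⟨?_, Or.inl h⟩
  simp only [Ne, Sum.inl.injEq]
  intro hc
  rw [hc] at h
  omega

lemma adj_u0j {j : Fin (m+1)} (hj : j ≠ 0) :
    (lollipop n m).Adj (Sum.inr (0 : Fin (m+1))) (Sum.inr j) := by
  rw [lollipop, SimpleGraph.fromRel_adj]
  refine ⟨?_, Or.inl ⟨rfl, hj⟩⟩
  simp only [Ne, Sum.inr.injEq]
  exact fun hc => hj hc.symm

lemma adj_j_v1 {j : Fin (m+1)} (hj : j ≠ 0) :
    (lollipop n m).Adj (Sum.inr j) (Sum.inl (0 : Fin (n+1))) := by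
  rw [lollipop, SimpleGraph.fromRel_adj]
  exact ⟨fun hc => by injection hc, Or.inr ⟨rfl, hj⟩⟩

def Spath (n m : ℕ) (i : ℕ) (p : (Fin (n+1) ⊕ Fin (m+1)) → ℕ) : ℕ :=
  ∑ j : Fin (n+1), if i ≤ (j:ℕ) then p (Sum.inl j) * 2^(j:ℕ) else 0

lemma pathSolve (n m : ℕ) : ∀ (d i : ℕ), i + d = n →
    ∀ p : (Fin (n+1) ⊕ Fin (m+1)) → ℕ, 2^n ≤ Spath n m i p →
    Solvable (lollipop n m) (Sum.inl (Fin.last n)) p := by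
  intro d
  induction d with
  | zero =>
    intro i hi p hp
    have hi' : i = n := by omega
    rw [hi'] at hp
    have hS : Spath n m n p = p (Sum.inl (Fin.last n)) * 2^n := by
      unfold Spath
      rw [Finset.sum_eq_single (Fin.last n)]
      · rw [if_pos (by rw [Fin.val_last]), Fin.val_last]
      · intro j _ hj
        rw [if_neg]
        intro hc
        apply hj
        have : (j:ℕ) ≤ n := Nat.lt_succ_iff.mp j.isLt
        exact Fin.ext (by rw [Fin.val_last]; omega)
      · intro h; exact absurd (Finset.mem_univ _) h
    rw [hS] at hp
    have hpos : 0 < 2^n := Nat.two_pow_pos n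
    have hr : 1 ≤ p (Sum.inl (Fin.last n)) := by
      by_contra hr
      push_neg at hr
      have h0 : p (Sum.inl (Fin.last n)) = 0 := by omega
      rw [h0, Nat.zero_mul] at hp
      omega
    exact ⟨p, Relation.ReflTransGen.refl, hr⟩
  | succ d ih =>
    intro i hi p hp
    have hi' : i < n := by omega
    set iF : Fin (n+1) := ⟨i, by omega⟩ with hiF
    set iF' : Fin (n+1) := ⟨i+1, by omega⟩ with hiF'
    have hadj : (lollipop n m).Adj (Sum.inl iF) (Sum.inl iF') := adj_path rfl
    set a := p (Sum.inl iF) with ha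
    have hmv := moveMany hadj (a/2) p (by omega)
    set q : (Fin (n+1) ⊕ Fin (m+1)) → ℕ :=
      fun x => if x = Sum.inl iF then p (Sum.inl iF) - 2*(a/2)
        else if x = Sum.inl iF' then p (Sum.inl iF') + a/2 else p x with hqdef
    have qv : ∀ x, q x = if x = Sum.inl iF then p (Sum.inl iF) - 2*(a/2)
        else if x = Sum.inl iF' then p (Sum.inl iF') + a/2 else p x := fun x => rfl
    have hneF : iF ≠ iF' := by
      intro hc
      have := congrArg Fin.val hc
      simp [hiF, hiF'] at this
    have hsplit : Spath n m i p = a * 2^i + Spath n m (i+1) p := by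
      unfold Spath
      have pt : ∀ j : Fin (n+1),
          (if i ≤ (j:ℕ) then p (Sum.inl j) * 2^(j:ℕ) else 0)
          = (if j = iF then p (Sum.inl j) * 2^(j:ℕ) else 0)
            + (if i+1 ≤ (j:ℕ) then p (Sum.inl j) * 2^(j:ℕ) else 0) := by
        intro j
        by_cases hj : (j:ℕ) = i
        · have hjF : j = iF := Fin.ext (by simp [hiF, hj])
          rw [if_pos (by omega), if_pos hjF, if_neg (by omega)]
          exact (Nat.add_zero _).symm
        · have hne : j ≠ iF := fun hc => hj (by rw [hc])
          by_cases hij : i ≤ (j:ℕ)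
          · rw [if_pos hij, if_neg hne, if_pos (by omega), Nat.zero_add]
          · rw [if_neg hij, if_neg hne, if_neg (by omega)]
      rw [Finset.sum_congr rfl (fun j _ => pt j), Finset.sum_add_distrib,
        Finset.sum_ite_eq' Finset.univ iF (fun j => p (Sum.inl j) * 2^(j:ℕ))]
      simp
      rfl
    have hq : Spath n m (i+1) q = Spath n m (i+1) p + (a/2) * 2^(i+1) := by
      unfold Spath
      have pt : ∀ j : Fin (n+1),
          (if i+1 ≤ (j:ℕ) then q (Sum.inl j) * 2^(j:ℕ) else 0)
          = (if i+1 ≤ (j:ℕ) then p (Sum.inl j) * 2^(j:ℕ) else 0)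
            + (if j = iF' then (a/2) * 2^(i+1) else 0) := by
        intro j
        by_cases hj : j = iF'
        · subst hj
          have h1 : Sum.inl (α := Fin (n+1)) (β := Fin (m+1)) iF' ≠ Sum.inl iF := by
            simp only [Ne, Sum.inl.injEq]; exact hneF.symm
          have hcond : i+1 ≤ (iF':ℕ) := le_refl _
          rw [if_pos hcond, if_pos hcond, if_pos rfl]
          have hv : q (Sum.inl iF') = p (Sum.inl iF') + a/2 := by
            rw [qv, if_neg h1, if_pos rfl]
          rw [hv, Nat.add_mul]
        · have hqj : q (Sum.inl j) = p (Sum.inl j) ∨ ¬ (i+1 ≤ (j:ℕ)) := by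
            by_cases hij : i+1 ≤ (j:ℕ)
            · left
              have h1 : Sum.inl (α := Fin (n+1)) (β := Fin (m+1)) j ≠ Sum.inl iF := by
                simp only [Ne, Sum.inl.injEq]
                intro hc; have := congrArg Fin.val hc; simp [hiF] at this; omega
              have h2 : Sum.inl (α := Fin (n+1)) (β := Fin (m+1)) j ≠ Sum.inl iF' := by
                simp only [Ne, Sum.inl.injEq]; exact hj
              rw [qv, if_neg h1, if_neg h2]
            · right; exact hij
          rcases hqj with h | h
          · rw [h, if_neg hj]
            exact (Nat.add_zero _).symm
          · rw [if_neg h, if_neg h, if_neg hj]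
      rw [Finset.sum_congr rfl (fun j _ => pt j), Finset.sum_add_distrib,
        Finset.sum_ite_eq' Finset.univ iF' (fun _ => (a/2) * 2^(i+1))]
      simp
    have hdvd : 2^(i+1) ∣ Spath n m (i+1) q := by
      unfold Spath
      apply Finset.dvd_sum
      intro j _
      split_ifs with h
      · exact Dvd.dvd.mul_left (pow_dvd_pow 2 h) _
      · exact dvd_zero _
    have hkey : 2^n ≤ Spath n m (i+1) q + 2^i := by
      have h1 : a * 2^i ≤ (2*(a/2)+1) * 2^i := Nat.mul_le_mul_right _ (by omega)
      have h2 : (2*(a/2)+1) * 2^i = (a/2) * 2^(i+1) + 2^i := by rw [pow_succ]; ring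
      rw [hsplit] at hp
      omega
    have hge : 2^n ≤ Spath n m (i+1) q := by
      by_contra hc
      push_neg at hc
      have hd2 : 2^(i+1) ∣ 2^n - Spath n m (i+1) q :=
        Nat.dvd_sub (pow_dvd_pow 2 (by omega)) hdvd
      have hle : 2^(i+1) ≤ 2^n - Spath n m (i+1) q := Nat.le_of_dvd (by omega) hd2
      have h2i : 2^(i+1) = 2*2^i := by rw [pow_succ]; ring
      have := Nat.one_le_two_pow (n := i)
      omega
    exact solvable_of_rel hmv (ih (i+1) (by omega) q hge)


def Apath (n m : ℕ) (p : (Fin (n+1) ⊕ Fin (m+1)) → ℕ) : ℕ :=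
  ∑ j : Fin (n+1), p (Sum.inl j) * 2^(j:ℕ)

def Eu (n m : ℕ) (p : (Fin (n+1) ⊕ Fin (m+1)) → ℕ) : ℕ :=
  ∑ j ∈ Finset.univ.filter (fun j : Fin (m+1) => j ≠ 0), p (Sum.inr j) / 2

def tu (n m : ℕ) (p : (Fin (n+1) ⊕ Fin (m+1)) → ℕ) : ℕ :=
  (Finset.univ.filter (fun j : Fin (m+1) => j ≠ 0 ∧ p (Sum.inr j) % 2 = 1)).card

lemma Spath_zero (p : (Fin (n+1) ⊕ Fin (m+1)) → ℕ) : Spath n m 0 p = Apath n m p := by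
  unfold Spath Apath
  exact Finset.sum_congr rfl (fun j _ => if_pos (Nat.zero_le _))

lemma D_init {M a e t k : ℕ} (h : 4*M ≤ 2*a + 2*e + t + k) (ht : t ≤ 2*M) :
    M ≤ a + e + Dfun t k := by unfold Dfun; split_ifs <;> omega

lemma D_step1 {t k : ℕ} (ht : 1 ≤ t) (hk : 2 ≤ k) : Dfun t k ≤ Dfun (t-1) (k-2) + 1 := by
  unfold Dfun; split_ifs <;> omega

lemma D_step2 {k : ℕ} (hk : 4 ≤ k) : Dfun 0 k ≤ Dfun 0 (k-4) + 1 := by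
  unfold Dfun; split_ifs <;> omega

lemma D_zero {t k : ℕ} (h : k ≤ 1 ∨ (t = 0 ∧ k ≤ 3)) : Dfun t k = 0 := by
  unfold Dfun; split_ifs <;> omega

lemma Apath_step {p q : (Fin (n+1) ⊕ Fin (m+1)) → ℕ}
    (h0 : q (Sum.inl (0 : Fin (n+1))) = p (Sum.inl 0) + 1)
    (h : ∀ i : Fin (n+1), i ≠ 0 → q (Sum.inl i) = p (Sum.inl i)) :
    Apath n m q = Apath n m p + 1 := by
  unfold Apath
  rw [← Finset.add_sum_erase _ _ (Finset.mem_univ (0 : Fin (n+1))),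
    ← Finset.add_sum_erase _ _ (Finset.mem_univ (0 : Fin (n+1)))]
  have hrest : ∑ x ∈ Finset.univ.erase (0 : Fin (n+1)), q (Sum.inl x) * 2^(x:ℕ)
      = ∑ x ∈ Finset.univ.erase (0 : Fin (n+1)), p (Sum.inl x) * 2^(x:ℕ) :=
    Finset.sum_congr rfl (fun x hx => by rw [h x (Finset.mem_erase.mp hx).1])
  rw [hrest, h0]
  have hv : ((0 : Fin (n+1)) : ℕ) = 0 := rfl
  rw [hv, pow_zero]
  ring

lemma Eu_zero {p : (Fin (n+1) ⊕ Fin (m+1)) → ℕ}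
    (h : ∀ j : Fin (m+1), j ≠ 0 → p (Sum.inr j) ≤ 1) : Eu n m p = 0 :=
  Finset.sum_eq_zero (fun j hj => by
    have := h j (Finset.mem_filter.mp hj).2; omega)

lemma tu_erase {p q : (Fin (n+1) ⊕ Fin (m+1)) → ℕ} {j : Fin (m+1)} (hj : j ≠ 0)
    (hodd : p (Sum.inr j) % 2 = 1) (hqj : q (Sum.inr j) % 2 = 0)
    (h : ∀ x : Fin (m+1), x ≠ j → x ≠ 0 → q (Sum.inr x) = p (Sum.inr x)) :
    tu n m q = tu n m p - 1 := by
  unfold tu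
  have hset : Finset.univ.filter (fun x : Fin (m+1) => x ≠ 0 ∧ q (Sum.inr x) % 2 = 1)
      = (Finset.univ.filter (fun x : Fin (m+1) => x ≠ 0 ∧ p (Sum.inr x) % 2 = 1)).erase j := by
    ext x
    simp only [Finset.mem_erase, Finset.mem_filter, Finset.mem_univ, true_and]
    by_cases hx : x = j
    · subst hx
      simp only [hqj]
      constructor
      · rintro ⟨-, hc⟩; omega
      · rintro ⟨hc, -⟩; exact absurd rfl hc
    · by_cases hx0 : x = 0
      · subst hx0
        constructor
        · rintro ⟨hc, -⟩; exact absurd rfl hc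
        · rintro ⟨-, hc, -⟩; exact absurd rfl hc
      · rw [h x hx hx0]
        constructor
        · rintro ⟨a, b⟩; exact ⟨hx, a, b⟩
        · rintro ⟨-, a, b⟩; exact ⟨a, b⟩
  rw [hset, Finset.card_erase_of_mem (Finset.mem_filter.2 ⟨Finset.mem_univ _, hj, hodd⟩)]

lemma tu_congr {p q : (Fin (n+1) ⊕ Fin (m+1)) → ℕ}
    (h : ∀ x : Fin (m+1), q (Sum.inr x) % 2 = p (Sum.inr x) % 2) : tu n m q = tu n m p := by
  unfold tu
  congr 1
  apply Finset.filter_congr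
  intro x _
  rw [h x]

lemma tu_zero {p : (Fin (n+1) ⊕ Fin (m+1)) → ℕ}
    (h : ∀ j : Fin (m+1), j ≠ 0 → p (Sum.inr j) % 2 = 0) : tu n m p = 0 := by
  unfold tu
  rw [Finset.card_eq_zero, Finset.filter_eq_empty_iff]
  rintro x - ⟨hx0, hx1⟩
  have := h x hx0
  omega

end Lolli

lemma mainLemma (n m : ℕ) (hm : 0 < m) : ∀ (N : ℕ) (p : (Fin (n+1) ⊕ Fin (m+1)) → ℕ),
    (∑ v, p v) < N → 2^n ≤ Apath n m p + Eu n m p + Dfun (tu n m p) (p (Sum.inr 0)) →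
    Solvable (lollipop n m) (Sum.inl (Fin.last n)) p := by
  intro N
  induction N with
  | zero => intro p h _; omega
  | succ N ih =>
    intro p hN hinv
    by_cases h1 : 2^n ≤ Apath n m p
    · exact pathSolve n m n 0 (by omega) p (by rw [Spath_zero]; omega)
    by_cases h2 : ∃ j : Fin (m+1), j ≠ 0 ∧ 2 ≤ p (Sum.inr j)
    · obtain ⟨j, hj0, hj2⟩ := h2
      have hadj := adj_j_v1 (n := n) hj0
      set q : (Fin (n+1) ⊕ Fin (m+1)) → ℕ := fun x =>
        if x = Sum.inr j then p (Sum.inr j) - 2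
        else if x = Sum.inl 0 then p (Sum.inl 0) + 1 else p x with hq
      have qv : ∀ x, q x = if x = Sum.inr j then p (Sum.inr j) - 2
        else if x = Sum.inl 0 then p (Sum.inl 0) + 1 else p x := fun _ => rfl
      have hmv : PebMove (lollipop n m) p q := ⟨_, _, hadj, hj2, rfl⟩
      have hA : Apath n m q = Apath n m p + 1 := by
        apply Apath_step
        · rw [qv, if_neg (by simp), if_pos rfl]
        · intro i hi
          rw [qv, if_neg (by simp), if_neg (by simp [hi])]
      have hEsplit : Eu n m q + 1 = Eu n m p := by
        unfold Eu
        have hjmem : j ∈ Finset.univ.filter (fun x : Fin (m+1) => x ≠ 0) :=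
          Finset.mem_filter.2 ⟨Finset.mem_univ _, hj0⟩
        rw [← Finset.add_sum_erase _ _ hjmem, ← Finset.add_sum_erase _ _ hjmem]
        have hrest : ∑ x ∈ (Finset.univ.filter (fun x : Fin (m+1) => x ≠ 0)).erase j,
            q (Sum.inr x) / 2
            = ∑ x ∈ (Finset.univ.filter (fun x : Fin (m+1) => x ≠ 0)).erase j,
            p (Sum.inr x) / 2 := by
          apply Finset.sum_congr rfl
          intro x hx
          have hxj : x ≠ j := (Finset.mem_erase.mp hx).1
          rw [qv, if_neg (by simp [hxj]), if_neg (by simp)]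
        rw [hrest]
        have hqj : q (Sum.inr j) = p (Sum.inr j) - 2 := by rw [qv, if_pos rfl]
        rw [hqj]
        omega
      have ht : tu n m q = tu n m p := by
        apply tu_congr
        intro x
        by_cases hx : x = j
        · subst hx; rw [qv, if_pos rfl]; omega
        · rw [qv, if_neg (by simp [hx]), if_neg (by simp)]
      have hk : q (Sum.inr 0) = p (Sum.inr 0) := by
        rw [qv, if_neg (by simp [Ne.symm hj0]), if_neg (by simp)]
      have hsum := sum_pebmove hmv
      apply solvable_of_rel (Relation.ReflTransGen.single hmv)
      exact ih q (by omega) (by rw [hA, ht, hk]; omega)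
    · push_neg at h2
      have hle1 : ∀ j : Fin (m+1), j ≠ 0 → p (Sum.inr j) ≤ 1 := fun j hj => by
        have := h2 j hj; omega
      have hE0 : Eu n m p = 0 := Eu_zero hle1
      by_cases h3 : 1 ≤ tu n m p ∧ 2 ≤ p (Sum.inr 0)
      · obtain ⟨ht1, hk2⟩ := h3
        obtain ⟨j, hjmem⟩ := Finset.card_pos.mp (show
          0 < (Finset.univ.filter (fun x : Fin (m+1) => x ≠ 0 ∧ p (Sum.inr x) % 2 = 1)).card
          from ht1)
        obtain ⟨-, hj0, hjodd⟩ := Finset.mem_filter.mp hjmem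
        have hj1 : p (Sum.inr j) = 1 := by have := hle1 j hj0; omega
        have hadj1 := adj_u0j (n := n) hj0
        have hadj2 := adj_j_v1 (n := n) hj0
        have hne0j : (Sum.inr 0 : Fin (n+1) ⊕ Fin (m+1)) ≠ Sum.inr j := by
          simp [Ne.symm hj0]
        set p1 : (Fin (n+1) ⊕ Fin (m+1)) → ℕ := fun x =>
          if x = Sum.inr 0 then p (Sum.inr 0) - 2
          else if x = Sum.inr j then p (Sum.inr j) + 1 else p x with hp1
        have p1v : ∀ x, p1 x = if x = Sum.inr 0 then p (Sum.inr 0) - 2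
          else if x = Sum.inr j then p (Sum.inr j) + 1 else p x := fun _ => rfl
        have hmv1 : PebMove (lollipop n m) p p1 := ⟨_, _, hadj1, hk2, rfl⟩
        have hp1j : p1 (Sum.inr j) = 2 := by
          rw [p1v, if_neg (Ne.symm hne0j), if_pos rfl, hj1]
        set p2 : (Fin (n+1) ⊕ Fin (m+1)) → ℕ := fun x =>
          if x = Sum.inr j then p1 (Sum.inr j) - 2
          else if x = Sum.inl 0 then p1 (Sum.inl 0) + 1 else p1 x with hp2
        have p2v : ∀ x, p2 x = if x = Sum.inr j then p1 (Sum.inr j) - 2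
          else if x = Sum.inl 0 then p1 (Sum.inl 0) + 1 else p1 x := fun _ => rfl
        have hmv2 : PebMove (lollipop n m) p1 p2 := ⟨_, _, hadj2, by omega, rfl⟩
        -- values of p2
        have hv1 : p2 (Sum.inl 0) = p (Sum.inl 0) + 1 := by
          rw [p2v, if_neg (by simp), if_pos rfl, p1v, if_neg (by simp), if_neg (by simp)]
        have hv2 : ∀ i : Fin (n+1), i ≠ 0 → p2 (Sum.inl i) = p (Sum.inl i) := by
          intro i hi
          rw [p2v, if_neg (by simp), if_neg (by simp [hi]), p1v,
            if_neg (by simp), if_neg (by simp)]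
        have hv3 : p2 (Sum.inr j) = 0 := by rw [p2v, if_pos rfl, hp1j]
        have hv4 : p2 (Sum.inr 0) = p (Sum.inr 0) - 2 := by
          rw [p2v, if_neg hne0j, if_neg (by simp), p1v, if_pos rfl]
        have hv5 : ∀ x : Fin (m+1), x ≠ 0 → x ≠ j → p2 (Sum.inr x) = p (Sum.inr x) := by
          intro x hx0 hxj
          rw [p2v, if_neg (by simp [hxj]), if_neg (by simp), p1v,
            if_neg (by simp [hx0]), if_neg (by simp [hxj])]
        have hA : Apath n m p2 = Apath n m p + 1 := Apath_step hv1 hv2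
        have hE : Eu n m p2 = 0 := by
          apply Eu_zero
          intro x hx0
          by_cases hxj : x = j
          · subst hxj; omega
          · rw [hv5 x hx0 hxj]; exact hle1 x hx0
        have ht : tu n m p2 = tu n m p - 1 := by
          apply tu_erase hj0 hjodd (by omega)
          intro x hxj hx0
          exact hv5 x hx0 hxj
        have hsum1 := sum_pebmove hmv1
        have hsum2 := sum_pebmove hmv2
        apply solvable_of_rel ((Relation.ReflTransGen.single hmv1).tail hmv2)
        apply ih p2 (by omega)
        rw [hA, hE, ht, hv4]
        have := D_step1 ht1 hk2
        omega
      · by_cases h4 : tu n m p = 0 ∧ 4 ≤ p (Sum.inr 0)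
        · obtain ⟨ht0, hk4⟩ := h4
          set j : Fin (m+1) := ⟨1, by omega⟩ with hjdef
          have hj0 : j ≠ 0 := by
            intro hc
            have := congrArg Fin.val hc
            simp [hjdef] at this
          have hfe : Finset.univ.filter
              (fun x : Fin (m+1) => x ≠ 0 ∧ p (Sum.inr x) % 2 = 1) = ∅ :=
            Finset.card_eq_zero.mp ht0
          have hjeven : p (Sum.inr j) % 2 = 0 := by
            by_contra hc
            have hmem : j ∈ Finset.univ.filter
                (fun x : Fin (m+1) => x ≠ 0 ∧ p (Sum.inr x) % 2 = 1) :=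
              Finset.mem_filter.2 ⟨Finset.mem_univ _, hj0, by omega⟩
            rw [hfe] at hmem
            exact absurd hmem (Finset.notMem_empty _)
          have hj00 : p (Sum.inr j) = 0 := by have := hle1 j hj0; omega
          have hadj1 := adj_u0j (n := n) hj0
          have hadj2 := adj_j_v1 (n := n) hj0
          have hne0j : (Sum.inr 0 : Fin (n+1) ⊕ Fin (m+1)) ≠ Sum.inr j := by
            simp [Ne.symm hj0]
          set p1 : (Fin (n+1) ⊕ Fin (m+1)) → ℕ := fun x =>
            if x = Sum.inr 0 then p (Sum.inr 0) - 2
            else if x = Sum.inr j then p (Sum.inr j) + 1 else p x with hp1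
          have p1v : ∀ x, p1 x = if x = Sum.inr 0 then p (Sum.inr 0) - 2
            else if x = Sum.inr j then p (Sum.inr j) + 1 else p x := fun _ => rfl
          have hmv1 : PebMove (lollipop n m) p p1 := ⟨_, _, hadj1, by omega, rfl⟩
          have hp1_0 : p1 (Sum.inr 0) = p (Sum.inr 0) - 2 := by rw [p1v, if_pos rfl]
          have hp1_j : p1 (Sum.inr j) = 1 := by
            rw [p1v, if_neg (Ne.symm hne0j), if_pos rfl, hj00]
          set p2 : (Fin (n+1) ⊕ Fin (m+1)) → ℕ := fun x =>
            if x = Sum.inr 0 then p1 (Sum.inr 0) - 2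
            else if x = Sum.inr j then p1 (Sum.inr j) + 1 else p1 x with hp2
          have p2v : ∀ x, p2 x = if x = Sum.inr 0 then p1 (Sum.inr 0) - 2
            else if x = Sum.inr j then p1 (Sum.inr j) + 1 else p1 x := fun _ => rfl
          have hmv2 : PebMove (lollipop n m) p1 p2 := ⟨_, _, hadj1, by omega, rfl⟩
          have hp2_j : p2 (Sum.inr j) = 2 := by
            rw [p2v, if_neg (Ne.symm hne0j), if_pos rfl, hp1_j]
          have hp2_0 : p2 (Sum.inr 0) = p (Sum.inr 0) - 4 := by
            rw [p2v, if_pos rfl, hp1_0]; omega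
          set p3 : (Fin (n+1) ⊕ Fin (m+1)) → ℕ := fun x =>
            if x = Sum.inr j then p2 (Sum.inr j) - 2
            else if x = Sum.inl 0 then p2 (Sum.inl 0) + 1 else p2 x with hp3
          have p3v : ∀ x, p3 x = if x = Sum.inr j then p2 (Sum.inr j) - 2
            else if x = Sum.inl 0 then p2 (Sum.inl 0) + 1 else p2 x := fun _ => rfl
          have hmv3 : PebMove (lollipop n m) p2 p3 := ⟨_, _, hadj2, by omega, rfl⟩
          -- values of p3
          have hv1 : p3 (Sum.inl 0) = p (Sum.inl 0) + 1 := by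
            rw [p3v, if_neg (by simp), if_pos rfl, p2v, if_neg (by simp),
              if_neg (by simp), p1v, if_neg (by simp), if_neg (by simp)]
          have hv2 : ∀ i : Fin (n+1), i ≠ 0 → p3 (Sum.inl i) = p (Sum.inl i) := by
            intro i hi
            rw [p3v, if_neg (by simp), if_neg (by simp [hi]), p2v, if_neg (by simp),
              if_neg (by simp), p1v, if_neg (by simp), if_neg (by simp)]
          have hv3 : p3 (Sum.inr j) = 0 := by rw [p3v, if_pos rfl, hp2_j]
          have hv4 : p3 (Sum.inr 0) = p (Sum.inr 0) - 4 := by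
            rw [p3v, if_neg hne0j, if_neg (by simp), hp2_0]
          have hv5 : ∀ x : Fin (m+1), x ≠ 0 → x ≠ j → p3 (Sum.inr x) = p (Sum.inr x) := by
            intro x hx0 hxj
            rw [p3v, if_neg (by simp [hxj]), if_neg (by simp), p2v,
              if_neg (by simp [hx0]), if_neg (by simp [hxj]), p1v,
              if_neg (by simp [hx0]), if_neg (by simp [hxj])]
          have hA : Apath n m p3 = Apath n m p + 1 := Apath_step hv1 hv2
          have hE : Eu n m p3 = 0 := by
            apply Eu_zero
            intro x hx0
            by_cases hxj : x = j
            · subst hxj; omega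
            · rw [hv5 x hx0 hxj]; exact hle1 x hx0
          have ht : tu n m p3 = 0 := by
            apply tu_zero
            intro x hx0
            by_cases hxj : x = j
            · subst hxj; omega
            · rw [hv5 x hx0 hxj]
              by_contra hc
              have hmem : x ∈ Finset.univ.filter
                  (fun y : Fin (m+1) => y ≠ 0 ∧ p (Sum.inr y) % 2 = 1) :=
                Finset.mem_filter.2 ⟨Finset.mem_univ _, hx0, by omega⟩
              rw [hfe] at hmem
              exact absurd hmem (Finset.notMem_empty _)
          have hsum1 := sum_pebmove hmv1
          have hsum2 := sum_pebmove hmv2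
          have hsum3 := sum_pebmove hmv3
          apply solvable_of_rel
            (((Relation.ReflTransGen.single hmv1).tail hmv2).tail hmv3)
          apply ih p3 (by omega)
          rw [hA, hE, ht, hv4]
          have := D_step2 hk4
          rw [ht0] at hinv
          omega
        · exfalso
          apply h1
          have hD : Dfun (tu n m p) (p (Sum.inr 0)) = 0 := by
            apply D_zero
            by_cases ht0 : tu n m p = 0
            · right
              constructor
              · exact ht0
              · by_contra hc
                exact h4 ⟨ht0, by omega⟩
            · left
              by_contra hc
              exact h3 ⟨by omega, by omega⟩
          omega

lemma final (n m : ℕ) (hm2 : m = 2^(n+1)) (p : (Fin (n + 1) ⊕ Fin (m + 1)) → ℕ)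
    (hp : (2 : ℝ) ^ (n + 2) ≤ ∑ v, (p v : ℝ) * wL n v) :
    Solvable (lollipop n m) (Sum.inl (Fin.last n)) p := by
  set Wn : ℕ := (∑ i : Fin (n+1), if (i:ℕ) = n then 0 else p (Sum.inl i) * 2^((i:ℕ)+1))
    + ∑ j : Fin (m+1), p (Sum.inr j) with hWn
  have hcast : ∑ v, (p v : ℝ) * wL n v = (Wn : ℝ) := by
    rw [Fintype.sum_sum_type]
    push_cast [hWn]
    congr 1
    · apply Finset.sum_congr rfl
      intro i _
      show (p (Sum.inl i) : ℝ) * (if (i:ℕ) = n then (0:ℝ) else 2^((i:ℕ)+1)) = _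
      split_ifs <;> push_cast <;> ring
    · apply Finset.sum_congr rfl
      intro j _
      show (p (Sum.inr j) : ℝ) * 1 = _
      ring
  have hWnat : 2^(n+2) ≤ Wn := by
    rw [hcast] at hp
    exact_mod_cast hp
  have hA2 : (∑ i : Fin (n+1), if (i:ℕ) = n then 0 else p (Sum.inl i) * 2^((i:ℕ)+1))
      ≤ 2 * Apath n m p := by
    unfold Apath
    rw [Finset.mul_sum]
    apply Finset.sum_le_sum
    intro i _
    split_ifs
    · exact Nat.zero_le _
    · rw [pow_succ]; ring_nf; exact le_refl _
  have hB : ∑ j : Fin (m+1), p (Sum.inr j)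
      = p (Sum.inr 0) + (2 * Eu n m p + tu n m p) := by
    rw [← Finset.add_sum_erase _ _ (Finset.mem_univ (0 : Fin (m+1)))]
    congr 1
    have herase : Finset.univ.erase (0 : Fin (m+1))
        = Finset.univ.filter (fun j : Fin (m+1) => j ≠ 0) := by
      ext x
      simp [Finset.mem_erase]
    rw [herase]
    unfold Eu
    rw [Finset.mul_sum]
    have htu : tu n m p = ∑ j ∈ Finset.univ.filter (fun j : Fin (m+1) => j ≠ 0),
        p (Sum.inr j) % 2 := by
      unfold tu
      have hff : Finset.univ.filter (fun j : Fin (m+1) => j ≠ 0 ∧ p (Sum.inr j) % 2 = 1)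
          = (Finset.univ.filter (fun j : Fin (m+1) => j ≠ 0)).filter
            (fun j => p (Sum.inr j) % 2 = 1) := by
        rw [Finset.filter_filter]
      rw [hff, Finset.card_filter]
      apply Finset.sum_congr rfl
      intro j _
      split_ifs with h
      · omega
      · omega
    rw [htu, ← Finset.sum_add_distrib]
    apply Finset.sum_congr rfl
    intro j _
    omega
  have htle : tu n m p ≤ m := by
    unfold tu
    calc (Finset.univ.filter (fun j : Fin (m+1) => j ≠ 0 ∧ p (Sum.inr j) % 2 = 1)).card
        ≤ (Finset.univ.erase (0 : Fin (m+1))).card := by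
          apply Finset.card_le_card
          intro x hx
          obtain ⟨-, hx0, -⟩ := Finset.mem_filter.mp hx
          exact Finset.mem_erase.2 ⟨hx0, Finset.mem_univ _⟩
      _ = m := by
          rw [Finset.card_erase_of_mem (Finset.mem_univ _), Finset.card_univ,
            Fintype.card_fin]
          omega
  have hinv : 2^n ≤ Apath n m p + Eu n m p + Dfun (tu n m p) (p (Sum.inr 0)) := by
    apply D_init (h := ?_) (ht := ?_)
    · have e1 : 2^(n+2) = 4 * 2^n := by ring
      omega
    · have e2 : m = 2 * 2^n := by rw [hm2, pow_succ]; ring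
      omega
  exact mainLemma n m (by rw [hm2]; positivity) (∑ v, p v + 1) p
    (Nat.lt_succ_self _) hinv

end Peb13

theorem stmt13 (n : ℕ) (hn : 1 ≤ n) :
    ∀ p : (Fin (n + 1) ⊕ Fin (2 ^ (n + 1) + 1)) → ℕ,
      (2 : ℝ) ^ (n + 2) ≤ confWeight (wL n) p →
      Solvable (lollipop n (2 ^ (n + 1))) (Sum.inl (Fin.last n)) p := by
  intro p hp
  exact Peb13.final n (2^(n+1)) rfl p hp
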